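/- For a fixed integer q ≥ 1, the least common multiple of the integers m!/(⌊m/q⌋!)^q for 1 ≤ m ≤ n grows at most exponentially in n: there exists C > 0 such that lcm_{1 ≤ m ≤ n} (m!/(⌊m/q⌋!)^q) ≤ C^n for all n ≥ 1. -/

import Mathlib

open Finset Nat

private lemma my_pow_fact_dvd (q k m : ℕ) (h : q * k ≤ m) : (k !) ^ q ∣ m ! := by
  have h1 : (∏ _i ∈ Finset.range q, k !) ∣ (∑ _i ∈ Finset.range q, k)! :=
    Nat.prod_factorial_dvd_factorial_sum _ _
  simpa [Finset.prod_const, Finset.sum_const, Finset.card_range, smul_eq_mul] using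
    h1.trans (Nat.factorial_dvd_factorial (by simpa using h))

private lemma my_sq_succ_le (s : ℕ) (hs : 2 ≤ s) : (s + 1) * (s + 1) ≤ 4 ^ s := by
  induction s with
  | zero => omega
  | succ s ih =>
    rcases Nat.lt_or_ge s 2 with h | h
    · interval_cases s <;> norm_num
    · have h1 := ih h
      have h2 : (s + 2) * (s + 2) ≤ 4 * ((s + 1) * (s + 1)) := by nlinarith
      have h3 : (4:ℕ) ^ (s + 1) = 4 * 4 ^ s := by ring
      rw [h3]
      nlinarith [ih h]

private lemma my_le_four_pow_sqrt (n : ℕ) : n ≤ 4 ^ Nat.sqrt n := by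
  have h1 : n < (Nat.sqrt n + 1) * (Nat.sqrt n + 1) := by
    simpa [Nat.succ_eq_add_one] using Nat.lt_succ_sqrt n
  rcases Nat.lt_or_ge (Nat.sqrt n) 2 with h | h
  · interval_cases (Nat.sqrt n) <;> omega
  · have := my_sq_succ_le (Nat.sqrt n) h
    omega

private lemma my_lcm_Icc_dvd (n : ℕ) :
    (Finset.Icc 1 n).lcm id ∣
      ∏ p ∈ Finset.range (n + 1) with p.Prime, p ^ Nat.log p n := by
  apply Finset.lcm_dvd
  intro m hm
  simp only [Finset.mem_Icc] at hm
  have hm0 : m ≠ 0 := by omega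
  have hid : (id m : ℕ) = ∏ p ∈ m.factorization.support, p ^ m.factorization p :=
    (Nat.factorization_prod_pow_eq_self hm0).symm
  rw [hid]
  have hsub : m.factorization.support ⊆ (Finset.range (n + 1)).filter Nat.Prime := by
    intro p hp
    rw [Nat.support_factorization] at hp
    have hpp : p.Prime := Nat.prime_of_mem_primeFactors hp
    have hpd : p ∣ m := Nat.dvd_of_mem_primeFactors hp
    have : p ≤ m := Nat.le_of_dvd (by omega) hpd
    simp only [Finset.mem_filter, Finset.mem_range]
    exact ⟨by omega, hpp⟩
  calc (∏ p ∈ m.factorization.support, p ^ m.factorization p)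
      ∣ ∏ p ∈ m.factorization.support, p ^ Nat.log p n := by
        apply Finset.prod_dvd_prod_of_dvd
        intro p hp
        have hpp : p.Prime := Nat.prime_of_mem_primeFactors
          (by rwa [Nat.support_factorization] at hp)
        apply pow_dvd_pow
        rw [Nat.le_log_iff_pow_le hpp.one_lt (by omega : n ≠ 0)]
        exact le_trans (Nat.le_of_dvd (by omega) (Nat.ordProj_dvd m p)) (by omega)
    _ ∣ ∏ p ∈ (Finset.range (n + 1)).filter Nat.Prime, p ^ Nat.log p n :=
        Finset.prod_dvd_prod_of_subset _ _ _ hsub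

private lemma my_prod_primepow_le (n : ℕ) (hn : 1 ≤ n) :
    (∏ p ∈ Finset.range (n + 1) with p.Prime, p ^ Nat.log p n) ≤ 16 ^ n := by
  classical
  set S := (Finset.range (n + 1)).filter Nat.Prime with hS
  have hsplit : (∏ p ∈ S, p ^ Nat.log p n) =
      (∏ p ∈ S.filter fun p => p * p ≤ n, p ^ Nat.log p n) *
      (∏ p ∈ S.filter fun p => ¬ p * p ≤ n, p ^ Nat.log p n) :=
    (Finset.prod_filter_mul_prod_filter_not S _ _).symm
  have hprime : ∀ p ∈ S, p.Prime := fun p hp => (Finset.mem_filter.mp hp).2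
  have hsmall : (∏ p ∈ S.filter fun p => p * p ≤ n, p ^ Nat.log p n) ≤ 4 ^ n := by
    have hcard : (S.filter fun p => p * p ≤ n).card ≤ Nat.sqrt n := by
      have hsub : (S.filter fun p => p * p ≤ n) ⊆ Finset.Icc 2 (Nat.sqrt n) := by
        intro p hp
        rw [Finset.mem_filter] at hp
        have hpp := hprime p hp.1
        have : p ≤ Nat.sqrt n := Nat.le_sqrt.mpr hp.2
        simp only [Finset.mem_Icc]
        exact ⟨hpp.two_le, this⟩
      have := Finset.card_le_card hsub
      simp [Nat.card_Icc] at this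
      omega
    calc (∏ p ∈ S.filter fun p => p * p ≤ n, p ^ Nat.log p n)
        ≤ ∏ _p ∈ S.filter fun p => p * p ≤ n, n := by
          apply Finset.prod_le_prod' <;> try skip
          intro p _
          exact Nat.pow_log_le_self p (by omega)
      _ = n ^ (S.filter fun p => p * p ≤ n).card := by
          rw [Finset.prod_const]
      _ ≤ (4 ^ Nat.sqrt n) ^ (S.filter fun p => p * p ≤ n).card :=
          Nat.pow_le_pow_left (my_le_four_pow_sqrt n) _
      _ ≤ (4 ^ Nat.sqrt n) ^ Nat.sqrt n :=
          Nat.pow_le_pow_right (by positivity) hcard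
      _ = 4 ^ (Nat.sqrt n * Nat.sqrt n) := by rw [← pow_mul]
      _ ≤ 4 ^ n := Nat.pow_le_pow_right (by norm_num) (Nat.sqrt_le n)
  have hlarge : (∏ p ∈ S.filter fun p => ¬ p * p ≤ n, p ^ Nat.log p n) ≤ 4 ^ n := by
    calc (∏ p ∈ S.filter fun p => ¬ p * p ≤ n, p ^ Nat.log p n)
        ≤ ∏ p ∈ S.filter fun p => ¬ p * p ≤ n, p := by
          apply Finset.prod_le_prod' <;> try skip
          intro p hp
          rw [Finset.mem_filter] at hp
          have hpp := hprime p hp.1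
          have hlog : Nat.log p n ≤ 1 := by
            by_contra hcon
            push_neg at hcon
            have : p ^ 2 ≤ p ^ Nat.log p n := Nat.pow_le_pow_right hpp.pos (by omega)
            have h2 : p ^ Nat.log p n ≤ n := Nat.pow_log_le_self p (by omega)
            have : p * p ≤ n := by
              have := le_trans ‹p ^ 2 ≤ p ^ Nat.log p n› h2
              nlinarith [sq p]
            exact hp.2 this
          calc p ^ Nat.log p n ≤ p ^ 1 := Nat.pow_le_pow_right hpp.pos hlog
            _ = p := pow_one p
      _ ≤ ∏ p ∈ S, p := by
          apply Finset.prod_le_prod_of_subset_of_one_le' (Finset.filter_subset _ _)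
          intro p hp _
          exact (hprime p hp).pos
      _ = primorial n := rfl
      _ ≤ 4 ^ n := primorial_le_4_pow n
  calc (∏ p ∈ S, p ^ Nat.log p n)
      = _ * _ := hsplit
    _ ≤ 4 ^ n * 4 ^ n := Nat.mul_le_mul hsmall hlarge
    _ = 16 ^ n := by rw [← Nat.mul_pow]

private lemma my_term_dvd (q n m : ℕ) (hq : 1 ≤ q) (hm1 : 1 ≤ m) (hmn : m ≤ n)
    (hL : (Finset.Icc 1 n).lcm id ≠ 0) :
    m ! / ((m / q)!) ^ q ∣ ((Finset.Icc 1 n).lcm id) ^ (q - 1) := by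
  set L := (Finset.Icc 1 n).lcm id with hLdef
  set k := m / q with hk
  have hqk : q * k ≤ m := by
    rw [hk, mul_comm]
    exact Nat.div_mul_le_self m q
  have hdvd : ((k !) ^ q) ∣ m ! := my_pow_fact_dvd q k m hqk
  have hf0 : m ! / (k !) ^ q ≠ 0 := by
    have h1 : (k !) ^ q ≤ m ! := Nat.le_of_dvd (Nat.factorial_pos m) hdvd
    have h2 : 0 < (k !) ^ q := pow_pos (Nat.factorial_pos k) q
    exact (Nat.div_pos h1 h2).ne'
  rw [← Nat.factorization_le_iff_dvd hf0 (pow_ne_zero _ hL), Finsupp.le_def]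
  intro p
  by_cases hp : p.Prime
  swap
  · simp [Nat.factorization_eq_zero_of_not_prime _ hp]
  haveI : Fact p.Prime := ⟨hp⟩
  set b := Nat.log p m + 1 with hb
  have hbm : Nat.log p m < b := by omega
  have hbk : Nat.log p k < b :=
    lt_of_le_of_lt (Nat.log_mono_right (Nat.div_le_self m q)) hbm
  have hvm : (m !).factorization p = ∑ i ∈ Finset.Ico 1 b, m / p ^ i := by
    rw [Nat.factorization_def _ hp]
    exact padicValNat_factorial hbm
  have hvk : (k !).factorization p = ∑ i ∈ Finset.Ico 1 b, k / p ^ i := by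
    rw [Nat.factorization_def _ hp]
    exact padicValNat_factorial hbk
  have hdivEq : (m ! / (k !) ^ q).factorization p
      = (m !).factorization p - q * ((k !).factorization p) := by
    rw [Nat.factorization_div hdvd, Nat.factorization_pow, Finsupp.tsub_apply,
      Finsupp.smul_apply, smul_eq_mul]
  rw [hdivEq, hvm, hvk, Finset.mul_sum]
  have hpoint : ∀ i ∈ Finset.Ico 1 b, m / p ^ i ≤ (q - 1) + q * (k / p ^ i) := by
    intro i _
    have h1 : k / p ^ i = (m / p ^ i) / q := by
      rw [hk, Nat.div_div_eq_div_mul, Nat.div_div_eq_div_mul, mul_comm]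
    rw [h1]
    have h2 := Nat.div_add_mod (m / p ^ i) q
    have h3 : (m / p ^ i) % q < q := Nat.mod_lt _ (by omega)
    omega
  have hsum : (∑ i ∈ Finset.Ico 1 b, m / p ^ i)
      ≤ (q - 1) * Nat.log p m + ∑ i ∈ Finset.Ico 1 b, q * (k / p ^ i) := by
    calc (∑ i ∈ Finset.Ico 1 b, m / p ^ i)
        ≤ ∑ i ∈ Finset.Ico 1 b, ((q - 1) + q * (k / p ^ i)) :=
          Finset.sum_le_sum hpoint
      _ = (q - 1) * Nat.log p m + ∑ i ∈ Finset.Ico 1 b, q * (k / p ^ i) := by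
          have hcard : b - 1 = Nat.log p m := by omega
          rw [Finset.sum_add_distrib, Finset.sum_const, Nat.card_Ico, hcard, smul_eq_mul,
            mul_comm]
  have hlog : Nat.log p m ≤ L.factorization p := by
    have hmem : p ^ Nat.log p m ∈ Finset.Icc 1 n := by
      simp only [Finset.mem_Icc]
      constructor
      · exact Nat.one_le_pow _ _ hp.pos
      · exact le_trans (Nat.pow_log_le_self p (by omega)) hmn
    have h1 : p ^ Nat.log p m ∣ L := Finset.dvd_lcm hmem
    exact (Nat.Prime.pow_dvd_iff_le_factorization hp hL).mp h1
  have hRHS : (L ^ (q - 1)).factorization p = (q - 1) * L.factorization p := by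
    rw [Nat.factorization_pow, Finsupp.smul_apply, smul_eq_mul]
  rw [hRHS]
  have h4 : (∑ i ∈ Finset.Ico 1 b, m / p ^ i) - (∑ i ∈ Finset.Ico 1 b, q * (k / p ^ i))
      ≤ (q - 1) * Nat.log p m := Nat.sub_le_iff_le_add.mpr hsum
  exact le_trans h4 (Nat.mul_le_mul_left _ hlog)

/-- For fixed `q ≥ 1`, the lcm of the integers `m!/(⌊m/q⌋!)^q` for `1 ≤ m ≤ n`
grows at most exponentially in `n`. -/
theorem lcm_factorial_ratio_exponential_growth (q : ℕ) (hq : 1 ≤ q) :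
    ∃ C : ℝ, 0 < C ∧ ∀ n : ℕ, 1 ≤ n →
      (((Finset.Icc 1 n).lcm fun m => m.factorial / ((m / q).factorial) ^ q : ℕ) : ℝ)
        ≤ C ^ n := by
  refine ⟨(16 : ℝ) ^ (q - 1), by positivity, ?_⟩
  intro n hn
  set L := (Finset.Icc 1 n).lcm id with hLdef
  have hP := my_lcm_Icc_dvd n
  have hPpos : 0 < ∏ p ∈ Finset.range (n + 1) with p.Prime, p ^ Nat.log p n := by
    apply Finset.prod_pos
    intro p hp
    exact pow_pos (Finset.mem_filter.mp hp).2.pos _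
  have hL0 : L ≠ 0 := by
    intro h
    rw [hLdef] at h
    rw [h] at hP
    exact absurd (Nat.eq_zero_of_zero_dvd hP).symm hPpos.ne
  have hF : (Finset.Icc 1 n).lcm (fun m => m ! / ((m / q)!) ^ q) ∣ L ^ (q - 1) := by
    apply Finset.lcm_dvd
    intro m hm
    simp only [Finset.mem_Icc] at hm
    exact my_term_dvd q n m hq hm.1 hm.2 hL0
  have hLle : L ≤ 16 ^ n :=
    le_trans (Nat.le_of_dvd hPpos hP) (my_prod_primepow_le n hn)
  have hmain : (Finset.Icc 1 n).lcm (fun m => m ! / ((m / q)!) ^ q) ≤ (16 ^ (q - 1)) ^ n := by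
    calc (Finset.Icc 1 n).lcm (fun m => m ! / ((m / q)!) ^ q)
        ≤ L ^ (q - 1) := Nat.le_of_dvd (pow_pos (Nat.pos_of_ne_zero hL0) _) hF
      _ ≤ (16 ^ n) ^ (q - 1) := Nat.pow_le_pow_left hLle _
      _ = (16 ^ (q - 1)) ^ n := by rw [← pow_mul, ← pow_mul, mul_comm]
  calc (((Finset.Icc 1 n).lcm fun m => m ! / ((m / q)!) ^ q : ℕ) : ℝ)
      ≤ (((16 ^ (q - 1)) ^ n : ℕ) : ℝ) := by exact_mod_cast hmain
    _ = ((16 : ℝ) ^ (q - 1)) ^ n := by push_cast; ring
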